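/- Let p > 1 and let μ be a probability measure on H¹(ℝ) that is invariant under the flow Σ of the defocusing NLS i∂_s U + ∂_y² U = |U|^{p−1} U. Then μ = δ_0. One may assume as input: (a) the equation is globally well-posed in H¹(ℝ) with conservation of the L² norm, and (b) for every u ∈ H¹(ℝ) and every r ∈ (2, ∞], ‖Σ(s) u‖_{L^r(ℝ)} → 0 as s → +∞. -/

import Mathlib

open MeasureTheory ENNReal Filter

/-- Membership in `H¹(ℝ)`: the function and its derivative are in `L²(ℝ)`. -/
def memH1 (u : ℝ → ℂ) : Prop :=
  MemLp u 2 (volume : Measure ℝ) ∧ MemLp (deriv u) 2 (volume : Measure ℝ)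

/-- The restricted `L²` seminorm is a continuous function on `L²`. -/
lemma contRestrict (s : Set ℝ) :
    Continuous fun u : Lp ℂ 2 (volume : Measure ℝ) =>
      eLpNorm (u : ℝ → ℂ) 2 (volume.restrict s) := by
  set F : Lp ℂ 2 (volume : Measure ℝ) → ℝ≥0∞ :=
    fun u => eLpNorm (u : ℝ → ℂ) 2 (volume.restrict s) with hF
  have hbd : ∀ u v : Lp ℂ 2 (volume : Measure ℝ), F u ≤ F v + edist u v := by
    intro u v
    have h1 : F u ≤ F v + eLpNorm ((u : ℝ → ℂ) - (v : ℝ → ℂ)) 2 (volume.restrict s) := by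
      have heq : (u : ℝ → ℂ) = (v : ℝ → ℂ) + ((u : ℝ → ℂ) - (v : ℝ → ℂ)) := by
        funext x; simp
      calc F u = eLpNorm ((v : ℝ → ℂ) + ((u : ℝ → ℂ) - (v : ℝ → ℂ))) 2
            (volume.restrict s) := by rw [hF]; simp only [← heq]
        _ ≤ _ := eLpNorm_add_le ((Lp.aestronglyMeasurable v).restrict)
            (((Lp.aestronglyMeasurable u).sub (Lp.aestronglyMeasurable v)).restrict) one_le_two
    refine h1.trans (add_le_add le_rfl ?_)
    calc eLpNorm ((u : ℝ → ℂ) - (v : ℝ → ℂ)) 2 (volume.restrict s)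
        ≤ eLpNorm ((u : ℝ → ℂ) - (v : ℝ → ℂ)) 2 volume := eLpNorm_restrict_le _ _ _ _
      _ = edist u v := (Lp.edist_def u v).symm
  rw [continuous_iff_continuousAt]
  intro u₀
  have hfin : F u₀ ≠ ∞ :=
    ((eLpNorm_restrict_le _ _ _ _).trans_lt (Lp.eLpNorm_lt_top u₀)).ne
  have hde : Tendsto (fun u => edist u u₀) (nhds u₀) (nhds 0) := by
    have : Tendsto (fun u : Lp ℂ 2 (volume : Measure ℝ) => edist u u₀) (nhds u₀)
        (nhds (edist u₀ u₀)) := (continuous_id.edist continuous_const).tendsto u₀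
    simpa using this
  have hlow : Tendsto (fun u => F u₀ - edist u u₀) (nhds u₀) (nhds (F u₀)) := by
    have := ENNReal.Tendsto.sub (tendsto_const_nhds (x := F u₀)) hde (Or.inl hfin)
    simpa using this
  have hhigh : Tendsto (fun u => F u₀ + edist u u₀) (nhds u₀) (nhds (F u₀)) := by
    have := Tendsto.add (tendsto_const_nhds (x := F u₀)) hde
    simpa using this
  refine tendsto_of_tendsto_of_tendsto_of_le_of_le hlow hhigh ?_ ?_
  · intro u
    have := hbd u₀ u
    rw [edist_comm] at this
    exact tsub_le_iff_right.mpr this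
  · intro u
    exact hbd u u₀

set_option maxHeartbeats 1000000 in
/-- A probability measure on `H¹(ℝ)` invariant under the (defocusing NLS) flow `S`, where one
assumes as input: (a) the flow is globally defined on `H¹`, conserves the `L²` norm, and
(b) for every `u ∈ H¹` and every `r ∈ (2,∞]`, `‖S(s)u‖_{L^r} → 0` as `s → +∞`, must be the
Dirac mass at `0`. -/
theorem stmt13 (p : ℝ) (hp : 1 < p)
    [MeasurableSpace (Lp ℂ 2 (volume : Measure ℝ))]
    [BorelSpace (Lp ℂ 2 (volume : Measure ℝ))]
    (S : ℝ → Lp ℂ 2 (volume : Measure ℝ) → Lp ℂ 2 (volume : Measure ℝ))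
    (hmeas : ∀ s, Measurable (S s))
    (hcons : ∀ (s : ℝ) (u : Lp ℂ 2 (volume : Measure ℝ)), ‖S s u‖ = ‖u‖)
    (hH1 : ∀ (s : ℝ) (u : Lp ℂ 2 (volume : Measure ℝ)),
      memH1 (u : ℝ → ℂ) → memH1 ((S s u : Lp ℂ 2 (volume : Measure ℝ)) : ℝ → ℂ))
    (hdecay : ∀ u : Lp ℂ 2 (volume : Measure ℝ), memH1 (u : ℝ → ℂ) →
      ∀ r : ℝ≥0∞, 2 < r →
        Filter.Tendsto (fun s => eLpNorm ((S s u : Lp ℂ 2 (volume : Measure ℝ)) : ℝ → ℂ) r volume)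
          Filter.atTop (nhds 0))
    (μ : Measure (Lp ℂ 2 (volume : Measure ℝ))) [IsProbabilityMeasure μ]
    (hsupp : μ {u : Lp ℂ 2 (volume : Measure ℝ) | memH1 (u : ℝ → ℂ)} = 1)
    (hinv : ∀ s, Measure.map (S s) μ = μ) :
    μ = Measure.dirac 0 := by
  classical
  set G : ℕ → Lp ℂ 2 (volume : Measure ℝ) → ℝ≥0∞ := fun n u =>
    min (eLpNorm (u : ℝ → ℂ) 2 (volume.restrict (Set.Icc (-(n : ℝ)) n))) 1 with hGdef
  have hGmeas : ∀ n, Measurable (G n) :=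
    fun n => ((contRestrict _).min continuous_const).measurable
  have hGle : ∀ n u, G n u ≤ 1 := fun n u => min_le_right _ _
  -- pointwise decay of `G n (S s u)` for `u ∈ H¹`
  have hdec : ∀ (n : ℕ) (u : Lp ℂ 2 (volume : Measure ℝ)), memH1 (u : ℝ → ℂ) →
      Tendsto (fun k : ℕ => G n (S k u)) atTop (nhds 0) := by
    intro n u hu
    set c : ℝ≥0∞ := (volume (Set.Icc (-(n : ℝ)) n)) ^
      (1 / (2 : ℝ≥0∞).toReal - 1 / (4 : ℝ≥0∞).toReal) with hc
    have hcne : c ≠ ∞ := by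
      apply ENNReal.rpow_ne_top_of_nonneg
      · norm_num
      · exact (measure_Icc_lt_top).ne
    have hb : ∀ s : ℝ, G n (S s u) ≤
        eLpNorm ((S s u : Lp ℂ 2 (volume : Measure ℝ)) : ℝ → ℂ) 4 volume * c := by
      intro s
      refine (min_le_left _ _).trans ?_
      have h1 := eLpNorm_le_eLpNorm_mul_rpow_measure_univ
        (p := 2) (q := 4) (μ := volume.restrict (Set.Icc (-(n : ℝ)) n))
        (by norm_num) ((Lp.aestronglyMeasurable (S s u)).restrict)
      refine h1.trans ?_
      rw [Measure.restrict_apply_univ]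
      exact mul_le_mul_left (eLpNorm_restrict_le _ _ _ _) _
    have h4 : Tendsto (fun s : ℝ =>
        eLpNorm ((S s u : Lp ℂ 2 (volume : Measure ℝ)) : ℝ → ℂ) 4 volume) atTop (nhds 0) :=
      hdecay u hu 4 (by norm_num)
    have hbt : Tendsto (fun s : ℝ =>
        eLpNorm ((S s u : Lp ℂ 2 (volume : Measure ℝ)) : ℝ → ℂ) 4 volume * c)
        atTop (nhds 0) := by
      have := ENNReal.Tendsto.mul_const h4 (Or.inr hcne)
      simpa using this
    have hR : Tendsto (fun s : ℝ => G n (S s u)) atTop (nhds 0) :=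
      tendsto_of_tendsto_of_tendsto_of_le_of_le tendsto_const_nhds hbt
        (fun s => bot_le) hb
    exact hR.comp tendsto_natCast_atTop_atTop
  -- for each `n`, `G n` vanishes `μ`-a.e.
  have hG0 : ∀ n, ∀ᵐ u ∂μ, G n u = 0 := by
    intro n
    set h : Lp ℂ 2 (volume : Measure ℝ) → ℝ≥0∞ := fun u =>
      limsup (fun k : ℕ => G n (S k u)) atTop with hhdef
    have hhmeas : Measurable h :=
      Measurable.limsup fun k => (hGmeas n).comp (hmeas k)
    have hhzero : ∀ u : Lp ℂ 2 (volume : Measure ℝ), memH1 (u : ℝ → ℂ) → h u = 0 := fun u hu => (hdec n u hu).limsup_eq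
    have hCmeas : MeasurableSet {u : Lp ℂ 2 (volume : Measure ℝ) | h u ≠ 0} :=
      (hhmeas (measurableSet_singleton 0)).compl
    have hCzero : μ {u : Lp ℂ 2 (volume : Measure ℝ) | h u ≠ 0} = 0 := by
      have hsub : {u : Lp ℂ 2 (volume : Measure ℝ) | memH1 (u : ℝ → ℂ)} ⊆
          {u : Lp ℂ 2 (volume : Measure ℝ) | h u ≠ 0}ᶜ := by
        intro u hu hne
        exact hne (hhzero u hu)
      have h1 : μ {u : Lp ℂ 2 (volume : Measure ℝ) | h u ≠ 0}ᶜ = 1 :=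
        le_antisymm prob_le_one (hsupp ▸ measure_mono hsub)
      have h2 := measure_add_measure_compl (μ := μ) hCmeas
      rw [h1, measure_univ] at h2
      exact (ENNReal.add_right_inj one_ne_top).mp (by rw [add_zero, add_comm]; exact h2)
    have hinth : ∫⁻ u, h u ∂μ = 0 := by
      rw [lintegral_eq_zero_iff hhmeas]
      exact ae_iff.mpr (by simpa using hCzero)
    have hconst : ∀ k : ℕ, ∫⁻ u, G n (S k u) ∂μ = ∫⁻ u, G n u ∂μ := by
      intro k
      rw [← lintegral_map (hGmeas n) (hmeas (k : ℝ)), hinv]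
    have hle := limsup_lintegral_le (μ := μ)
      (f := fun (k : ℕ) (u : Lp ℂ 2 (volume : Measure ℝ)) => G n (S k u))
      (fun _ => 1) (fun k => (hGmeas n).comp (hmeas _))
      (fun k => Filter.Eventually.of_forall fun u => hGle n _) (by simp)
    have hcs : (fun k : ℕ => ∫⁻ u, G n (S k u) ∂μ) = fun _ => ∫⁻ u, G n u ∂μ :=
      funext hconst
    rw [hcs, limsup_const] at hle
    have hkey : ∫⁻ u, G n u ∂μ = 0 :=
      le_antisymm (hle.trans (le_of_eq hinth)) bot_le
    rw [lintegral_eq_zero_iff (hGmeas n)] at hkey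
    exact hkey
  -- hence `μ`-a.e. `u = 0`
  have hae0 : ∀ᵐ u ∂μ, u = 0 := by
    have hall : ∀ᵐ u ∂μ, ∀ n : ℕ, G n u = 0 := ae_all_iff.mpr hG0
    filter_upwards [hall] with u hu
    have hres : ∀ n : ℕ, (u : ℝ → ℂ) =ᵐ[volume.restrict (Set.Icc (-(n : ℝ)) n)] 0 := by
      intro n
      have h1 : eLpNorm (u : ℝ → ℂ) 2 (volume.restrict (Set.Icc (-(n : ℝ)) n)) = 0 := by
        have := hu n
        rw [hGdef] at this
        have h2 : eLpNorm (u : ℝ → ℂ) 2 (volume.restrict (Set.Icc (-(n : ℝ)) n)) = ⊥ ∨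
            (1 : ℝ≥0∞) = ⊥ := min_eq_bot.mp (by rw [ENNReal.bot_eq_zero]; simpa using this)
        rcases h2 with h | h
        · exact h
        · simp at h
      exact (eLpNorm_eq_zero_iff ((Lp.aestronglyMeasurable u).restrict) two_ne_zero).mp h1
    have hUnion : (⋃ n : ℕ, Set.Icc (-(n : ℝ)) (n : ℝ)) = Set.univ := by
      ext x
      simp only [Set.mem_iUnion, Set.mem_Icc, Set.mem_univ, iff_true]
      obtain ⟨n, hn⟩ := exists_nat_ge |x|
      obtain ⟨h1, h2⟩ := abs_le.mp hn
      exact ⟨n, h1, h2⟩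
    have hvol : (u : ℝ → ℂ) =ᵐ[volume] 0 := by
      have := (ae_restrict_iUnion_iff (fun n : ℕ => Set.Icc (-(n : ℝ)) (n : ℝ))
        (fun x => (u : ℝ → ℂ) x = 0)).mpr hres
      rwa [hUnion, Measure.restrict_univ] at this
    exact Lp.eq_zero_iff_ae_eq_zero.mpr hvol
  -- conclude
  have h0 : μ {u : Lp ℂ 2 (volume : Measure ℝ) | u ≠ 0} = 0 := by
    simpa [ae_iff] using hae0
  ext t ht
  rw [Measure.dirac_apply' _ ht]
  by_cases h0t : (0 : Lp ℂ 2 (volume : Measure ℝ)) ∈ t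
  · rw [Set.indicator_of_mem h0t]
    refine le_antisymm prob_le_one ?_
    have hsub : {u : Lp ℂ 2 (volume : Measure ℝ) | u ≠ 0}ᶜ ⊆ t := by
      intro u hu
      simp only [Set.mem_compl_iff, Set.mem_setOf_eq, not_not] at hu
      rwa [hu]
    have hms : MeasurableSet {u : Lp ℂ 2 (volume : Measure ℝ) | u ≠ 0} := by
      have : ({u : Lp ℂ 2 (volume : Measure ℝ) | u ≠ 0}) =
          ({0} : Set (Lp ℂ 2 (volume : Measure ℝ)))ᶜ := by
        ext u; simp
      rw [this]
      exact (isClosed_singleton.measurableSet).compl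
    calc (1 : ℝ≥0∞) = μ {u : Lp ℂ 2 (volume : Measure ℝ) | u ≠ 0}ᶜ := by
          rw [measure_compl hms (measure_ne_top μ _), h0, measure_univ, tsub_zero]
      _ ≤ μ t := measure_mono hsub
  · rw [Set.indicator_of_notMem h0t]
    refine le_antisymm ?_ bot_le
    have hsub : t ⊆ {u : Lp ℂ 2 (volume : Measure ℝ) | u ≠ 0} := by
      intro u hut hu0
      exact h0t (hu0 ▸ hut)
    exact h0 ▸ measure_mono hsub
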